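/- arXiv:1401.6442 — 2 statements merged into one kernel-verified Lean document; each statement's English description precedes it below -/
import Mathlib

section
/- The coefficient of x^{-n+2} in the formal Laurent expansion of e^x/(e^x-1)^n equals (1/8)(n-3)(n - 4/3), for every integer n. -/
/-- `E = e^x` as a formal Laurent series over `ℚ`. -/
noncomputable def E : LaurentSeries ℚ := HahnSeries.ofPowerSeries ℤ ℚ (PowerSeries.exp ℚ)

/-- `q n k` is the coefficient of `x^k` in the Laurent expansion of `e^x/(e^x-1)^n`. -/
noncomputable def q (n k : ℤ) : ℚ := (E * ((E - 1) ^ n)⁻¹).coeff k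

open PowerSeries HahnSeries

/-- `(e^x - 1)/x` as a power series. -/
noncomputable def uu : PowerSeries ℚ := PowerSeries.mk fun k => (1 : ℚ) / (k + 1).factorial

lemma uu0 : constantCoeff uu = 1 := by
  have : constantCoeff uu = PowerSeries.coeff 0 uu := by simp
  rw [this]; simp [uu]

lemma uu1 : PowerSeries.coeff 1 uu = 1 / 2 := by
  simp [uu, Nat.factorial]
  norm_num

lemma uu2 : PowerSeries.coeff 2 uu = 1 / 6 := by
  simp [uu, Nat.factorial]
  norm_num

lemma X_mul_uu : (X : PowerSeries ℚ) * uu = exp ℚ - 1 := by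
  ext k
  cases k with
  | zero => simp [uu, coeff_exp]
  | succ k =>
    rw [coeff_succ_X_mul]
    simp [uu, coeff_exp]

lemma isUnit_uu : IsUnit uu := by
  rw [PowerSeries.isUnit_iff_constantCoeff, uu0]
  exact isUnit_one

/-- `uu` as a unit. -/
noncomputable def Uu : (PowerSeries ℚ)ˣ := isUnit_uu.unit

lemma Uu_val : (Uu : PowerSeries ℚ) = uu := isUnit_uu.unit_spec

lemma coeff_zero_mul (a b : PowerSeries ℚ) :
    PowerSeries.coeff 0 (a * b) = PowerSeries.coeff 0 a * PowerSeries.coeff 0 b := by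
  simp [coeff_zero_eq_constantCoeff, map_mul]

lemma coeff_one_mul' (a b : PowerSeries ℚ) :
    PowerSeries.coeff 1 (a * b) = PowerSeries.coeff 0 a * PowerSeries.coeff 1 b + PowerSeries.coeff 1 a * PowerSeries.coeff 0 b := by
  rw [PowerSeries.coeff_mul, Finset.Nat.sum_antidiagonal_eq_sum_range_succ_mk]
  simp [Finset.sum_range_succ]

lemma coeff_two_mul' (a b : PowerSeries ℚ) :
    PowerSeries.coeff 2 (a * b) = PowerSeries.coeff 0 a * PowerSeries.coeff 2 b + PowerSeries.coeff 1 a * PowerSeries.coeff 1 b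
      + PowerSeries.coeff 2 a * PowerSeries.coeff 0 b := by
  rw [PowerSeries.coeff_mul, Finset.Nat.sum_antidiagonal_eq_sum_range_succ_mk]
  simp [Finset.sum_range_succ]
  try ring

/-- Coefficients of integer powers of `uu`. -/
lemma coeff_Uu_zpow (m : ℤ) :
    PowerSeries.coeff 0 ((Uu ^ m : (PowerSeries ℚ)ˣ) : PowerSeries ℚ) = 1 ∧
    PowerSeries.coeff 1 ((Uu ^ m : (PowerSeries ℚ)ˣ) : PowerSeries ℚ) = (m : ℚ) / 2 ∧
    PowerSeries.coeff 2 ((Uu ^ m : (PowerSeries ℚ)ˣ) : PowerSeries ℚ)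
      = (m : ℚ) / 6 + (m : ℚ) * ((m : ℚ) - 1) / 8 := by
  induction m using Int.induction_on with
  | zero => refine ⟨by simp, by simp, by simp⟩
  | succ k ih =>
    obtain ⟨h0, h1, h2⟩ := ih
    have hmul : ((Uu ^ ((k : ℤ) + 1) : (PowerSeries ℚ)ˣ) : PowerSeries ℚ)
        = ((Uu ^ (k : ℤ) : (PowerSeries ℚ)ˣ) : PowerSeries ℚ) * uu := by
      rw [zpow_add_one, Units.val_mul, Uu_val]
    have c0 : PowerSeries.coeff 0 uu = 1 := by
      rw [coeff_zero_eq_constantCoeff]; exact uu0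
    refine ⟨?_, ?_, ?_⟩
    · rw [hmul, coeff_zero_mul, h0, c0]; ring
    · rw [hmul, coeff_one_mul', h0, h1, c0, uu1]; push_cast; ring
    · rw [hmul, coeff_two_mul', h0, h1, h2, c0, uu1, uu2]; push_cast; ring
  | pred k ih =>
    obtain ⟨h0, h1, h2⟩ := ih
    have hmul : ((Uu ^ (-(k : ℤ)) : (PowerSeries ℚ)ˣ) : PowerSeries ℚ)
        = ((Uu ^ (-(k : ℤ) - 1) : (PowerSeries ℚ)ˣ) : PowerSeries ℚ) * uu := by
      rw [← Uu_val, ← Units.val_mul, ← zpow_add_one, sub_add_cancel]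
    have c0 : PowerSeries.coeff 0 uu = 1 := by
      rw [coeff_zero_eq_constantCoeff]; exact uu0
    rw [hmul, coeff_zero_mul, c0, mul_one] at h0
    rw [hmul, coeff_one_mul', c0, uu1, h0, mul_one] at h1
    rw [hmul, coeff_two_mul', c0, uu1, uu2, h0, mul_one] at h2
    refine ⟨h0, ?_, ?_⟩
    · push_cast at h1 ⊢; linarith
    · push_cast at h1 h2 ⊢
      have e1 : PowerSeries.coeff 1 ((Uu ^ (-(k:ℤ) - 1) : (PowerSeries ℚ)ˣ) : PowerSeries ℚ)
          = (-(k:ℚ) - 1) / 2 := by linarith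
      rw [e1] at h2
      linarith

lemma E_sub_one : E - 1 = HahnSeries.single (1 : ℤ) (1 : ℚ)
    * HahnSeries.ofPowerSeries ℤ ℚ uu := by
  rw [← ofPowerSeries_X, ← map_mul, X_mul_uu, map_sub, map_one, E]

/-- The coefficient of `x^{-n+2}` in `e^x/(e^x-1)^n` is `(1/8)(n-3)(n-4/3)`. -/
theorem stmt8 (n : ℤ) :
    q n (-n + 2) = (1 / 8) * ((n : ℚ) - 3) * ((n : ℚ) - 4 / 3) := by
  classical
  set f : PowerSeries ℚ →+* LaurentSeries ℚ := HahnSeries.ofPowerSeries ℤ ℚ with hf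
  have hXne : (HahnSeries.single (1 : ℤ) (1 : ℚ)) ≠ 0 :=
    HahnSeries.single_ne_zero one_ne_zero
  -- the image of Uu as a unit of Laurent series
  set W : (LaurentSeries ℚ)ˣ := Units.map (f : PowerSeries ℚ →* LaurentSeries ℚ) Uu with hW
  have hWval : (W : LaurentSeries ℚ) = f uu := by
    simp [hW, Uu_val]
  have funits : ∀ m : ℤ, (f uu) ^ m = f ((Uu ^ m : (PowerSeries ℚ)ˣ) : PowerSeries ℚ) := by
    intro m
    calc (f uu) ^ m = ((W : LaurentSeries ℚ)) ^ m := by rw [hWval]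
      _ = ((W ^ m : (LaurentSeries ℚ)ˣ) : LaurentSeries ℚ) :=
          (Units.val_zpow_eq_zpow_val _ _).symm
      _ = ((Units.map (f : PowerSeries ℚ →* LaurentSeries ℚ) (Uu ^ m) :
            (LaurentSeries ℚ)ˣ) : LaurentSeries ℚ) := by rw [hW, map_zpow]
      _ = f ((Uu ^ m : (PowerSeries ℚ)ˣ) : PowerSeries ℚ) := rfl
  have key : ((E - 1) ^ n)⁻¹
      = HahnSeries.single (-n : ℤ) (1 : ℚ) * f ((Uu ^ (-n) : (PowerSeries ℚ)ˣ) : PowerSeries ℚ) := by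
    rw [← zpow_neg, E_sub_one, mul_zpow, ← RatFunc.single_zpow (-n), funits]
  have hE : E = f (exp ℚ) := rfl
  rw [q, key, hE, mul_left_comm, ← map_mul]
  have hadd : (-n + 2 : ℤ) = 2 + (-n) := by ring
  rw [hadd, HahnSeries.coeff_single_mul_add, one_mul]
  have h2 : ((2 : ℕ) : ℤ) = (2 : ℤ) := by norm_num
  rw [← h2, hf, ofPowerSeries_apply_coeff]
  obtain ⟨h0, h1, h2'⟩ := coeff_Uu_zpow (-n)
  rw [coeff_two_mul', h0, h1, h2']
  have e0 : PowerSeries.coeff 0 (exp ℚ) = 1 := by simp [coeff_exp]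
  have e1 : PowerSeries.coeff 1 (exp ℚ) = 1 := by simp [coeff_exp, Nat.factorial]
  have e2 : PowerSeries.coeff 2 (exp ℚ) = 1 / 2 := by
    rw [coeff_exp]
    norm_num [Nat.factorial]
  rw [e0, e1, e2]
  push_cast
  ring
end

section
/- Let f(x) = x + \sum_{n\geq 2} a_n x^n and let (b_j) be the unique sequence with \cdots \exp(b_2 x^3 d/dx)\exp(b_1 x^2 d/dx) \cdot x = f(x). Then the compositional inverse f^{-1}(x) (satisfying f(f^{-1}(x)) = f^{-1}(f(x)) = x) is given by the reversed product with negated coefficients: f^{-1}(x) = (\exp(-b_1 x^2 d/dx)\exp(-b_2 x^3 d/dx)\cdots) \cdot x. -/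
open PowerSeries

/-- The derivation `x^{j+1} d/dx` on `ℂ[[x]]`. -/
noncomputable def D (j : ℕ) (g : PowerSeries ℂ) : PowerSeries ℂ :=
  PowerSeries.X ^ (j + 1) * PowerSeries.derivativeFun g

/-- The operator `exp(b x^{j+1} d/dx)` on `ℂ[[x]]` (for `j ≥ 1` the `k`-th term of the
exponential series raises degrees by at least `k`, so each coefficient of the result is
the finite sum below). -/
noncomputable def expD (j : ℕ) (b : ℂ) (g : PowerSeries ℂ) : PowerSeries ℂ :=
  PowerSeries.mk fun n =>
    ∑ k ∈ Finset.range (n + 1), (b ^ k / (Nat.factorial k : ℂ)) * PowerSeries.coeff n ((D j)^[k] g)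


lemma coeff_derivativeFun_port (f : PowerSeries ℂ) (n : ℕ) :
    PowerSeries.coeff n (PowerSeries.derivativeFun f) = PowerSeries.coeff (n + 1) f * (n + 1) :=
  PowerSeries.coeff_derivative f n

lemma derivativeFun_C_port (r : ℂ) : PowerSeries.derivativeFun (PowerSeries.C r) = 0 :=
  PowerSeries.derivative_C

lemma coeff_D (j n : ℕ) (g : PowerSeries ℂ) :
    PowerSeries.coeff n (D j g) =
      if j + 1 ≤ n then ((n - j : ℕ) : ℂ) * PowerSeries.coeff (n - j) g else 0 := by
  rw [D, PowerSeries.coeff_X_pow_mul']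
  split_ifs with h
  · have h1 : n - (j+1) + 1 = n - j := by omega
    have h2 : ((n - (j+1) : ℕ) : ℂ) + 1 = ((n - j : ℕ) : ℂ) := by
      rw [← h1, Nat.cast_add, Nat.cast_one]
    rw [coeff_derivativeFun_port, h1, h2]; ring
  · rfl

lemma coeff_iterate_D_eq_zero {j k n : ℕ} (hk : 1 ≤ k) (hn : n ≤ k * j) (g : PowerSeries ℂ) :
    PowerSeries.coeff n ((D j)^[k] g) = 0 := by
  induction k generalizing n with
  | zero => omega
  | succ k ih =>
    rw [Function.iterate_succ_apply', coeff_D]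
    split_ifs with h
    · rcases Nat.eq_zero_or_pos k with rfl | hk'
      · omega
      · have hkj : (k+1)*j = k*j + j := by ring
        rw [ih hk' (by omega), mul_zero]
    · rfl

lemma coeff_iterate_D_eq_zero' {j k n : ℕ} (hj : 1 ≤ j) (hn : n < k) (g : PowerSeries ℂ) :
    PowerSeries.coeff n ((D j)^[k] g) = 0 :=
  coeff_iterate_D_eq_zero (by omega)
    (le_trans (by omega) (Nat.le_mul_of_pos_right k hj)) g

lemma coeff_expD (j : ℕ) (c : ℂ) (g : PowerSeries ℂ) (n : ℕ) :
    PowerSeries.coeff n (expD j c g) =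
      ∑ k ∈ Finset.range (n + 1), (c ^ k / (Nat.factorial k : ℂ)) * PowerSeries.coeff n ((D j)^[k] g) := by
  rw [expD, PowerSeries.coeff_mk]

lemma coeff_D_congr {n : ℕ} {g g' : PowerSeries ℂ} (j : ℕ)
    (h : ∀ m ≤ n, PowerSeries.coeff m g = PowerSeries.coeff m g') :
    ∀ m ≤ n, PowerSeries.coeff m (D j g) = PowerSeries.coeff m (D j g') := by
  intro m hm
  rw [coeff_D, coeff_D]
  split_ifs with h'
  · rw [h _ (by omega)]
  · rfl

lemma coeff_iterate_D_congr {n : ℕ} {g g' : PowerSeries ℂ} (j k : ℕ)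
    (h : ∀ m ≤ n, PowerSeries.coeff m g = PowerSeries.coeff m g') :
    ∀ m ≤ n, PowerSeries.coeff m ((D j)^[k] g) = PowerSeries.coeff m ((D j)^[k] g') := by
  induction k with
  | zero => simpa using h
  | succ k ih =>
    intro m hm
    rw [Function.iterate_succ_apply', Function.iterate_succ_apply']
    exact coeff_D_congr j ih m hm

lemma coeff_expD_congr {n : ℕ} {g g' : PowerSeries ℂ} (j : ℕ) (c : ℂ)
    (h : ∀ m ≤ n, PowerSeries.coeff m g = PowerSeries.coeff m g') :
    ∀ m ≤ n, PowerSeries.coeff m (expD j c g) = PowerSeries.coeff m (expD j c g') := by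
  intro m hm
  rw [coeff_expD, coeff_expD]
  exact Finset.sum_congr rfl fun k _ => by rw [coeff_iterate_D_congr j k h m hm]

lemma coeff_expD_of_le {j n : ℕ} (hn : n ≤ j) (c : ℂ) (g : PowerSeries ℂ) :
    PowerSeries.coeff n (expD j c g) = PowerSeries.coeff n g := by
  rw [coeff_expD]
  rw [Finset.sum_eq_single_of_mem 0 (Finset.mem_range.2 (by omega))]
  · simp
  · intro k _ hk
    rw [coeff_iterate_D_eq_zero (by omega) (le_trans hn (Nat.le_mul_of_pos_left j (by omega))) g,
      mul_zero]

lemma D_add (j : ℕ) (g h : PowerSeries ℂ) : D j (g + h) = D j g + D j h := by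
  rw [D, D, D, PowerSeries.derivativeFun_add, mul_add]

lemma iterate_D_add (j k : ℕ) (g h : PowerSeries ℂ) :
    (D j)^[k] (g + h) = (D j)^[k] g + (D j)^[k] h := by
  induction k with
  | zero => rfl
  | succ k ih => rw [Function.iterate_succ_apply', Function.iterate_succ_apply',
      Function.iterate_succ_apply', ih, D_add]

lemma expD_add (j : ℕ) (c : ℂ) (g h : PowerSeries ℂ) :
    expD j c (g + h) = expD j c g + expD j c h := by
  ext n
  rw [map_add, coeff_expD, coeff_expD, coeff_expD, ← Finset.sum_add_distrib]
  exact Finset.sum_congr rfl fun k _ => by rw [iterate_D_add, map_add, mul_add]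

lemma D_C_mul (j : ℕ) (a : ℂ) (g : PowerSeries ℂ) :
    D j (PowerSeries.C a * g) = PowerSeries.C a * D j g := by
  rw [D, D, PowerSeries.derivativeFun_mul, derivativeFun_C_port]
  simp [smul_eq_mul]
  ring

lemma iterate_D_C_mul (j k : ℕ) (a : ℂ) (g : PowerSeries ℂ) :
    (D j)^[k] (PowerSeries.C a * g) = PowerSeries.C a * (D j)^[k] g := by
  induction k with
  | zero => rfl
  | succ k ih => rw [Function.iterate_succ_apply', Function.iterate_succ_apply', ih, D_C_mul]

lemma expD_C_mul (j : ℕ) (c a : ℂ) (g : PowerSeries ℂ) :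
    expD j c (PowerSeries.C a * g) = PowerSeries.C a * expD j c g := by
  ext n
  rw [coeff_expD, PowerSeries.coeff_C_mul, coeff_expD, Finset.mul_sum]
  exact Finset.sum_congr rfl fun k _ => by
    rw [iterate_D_C_mul, PowerSeries.coeff_C_mul]; ring

lemma expD_one (j : ℕ) (c : ℂ) : expD j c (1 : PowerSeries ℂ) = 1 := by
  have hD : D j (1 : PowerSeries ℂ) = 0 := by
    rw [D, PowerSeries.derivativeFun_one, mul_zero]
  ext n
  rw [coeff_expD]
  rw [Finset.sum_eq_single_of_mem 0 (Finset.mem_range.2 (by omega))]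
  · simp
  · intro k _ hk
    obtain ⟨k', rfl⟩ := Nat.exists_eq_succ_of_ne_zero hk
    have hd0 : PowerSeries.derivativeFun (0 : PowerSeries ℂ) = 0 := by
      ext m; rw [coeff_derivativeFun_port]; simp
    have hD0 : D j (0 : PowerSeries ℂ) = 0 := by rw [D, hd0, mul_zero]
    rw [Function.iterate_succ_apply, hD, Function.iterate_fixed hD0, map_zero, mul_zero]

lemma D_mul (j : ℕ) (g h : PowerSeries ℂ) :
    D j (g * h) = D j g * h + g * D j h := by
  rw [D, D, D, PowerSeries.derivativeFun_mul, smul_eq_mul, smul_eq_mul, mul_add]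
  ring

lemma derivativeFun_nsmul (m : ℕ) (g : PowerSeries ℂ) :
    PowerSeries.derivativeFun (m • g) = m • PowerSeries.derivativeFun g := by
  ext n
  rw [coeff_derivativeFun_port, map_nsmul, map_nsmul,
    coeff_derivativeFun_port, smul_mul_assoc]

lemma D_nsmul (j : ℕ) (m : ℕ) (g : PowerSeries ℂ) : D j (m • g) = m • D j g := by
  rw [D, D, derivativeFun_nsmul, mul_smul_comm]

lemma D_sum (j : ℕ) {α : Type*} (s : Finset α) (f : α → PowerSeries ℂ) :
    D j (∑ a ∈ s, f a) = ∑ a ∈ s, D j (f a) :=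
  map_sum (AddMonoidHom.mk' (D j) (D_add j)) f s

lemma iterate_D_mul (j k : ℕ) (g h : PowerSeries ℂ) :
    (D j)^[k] (g * h) = ∑ p ∈ Finset.HasAntidiagonal.antidiagonal k,
      (k.choose p.1) • ((D j)^[p.1] g * (D j)^[p.2] h) := by
  induction k with
  | zero => simp
  | succ k ih =>
    rw [Function.iterate_succ_apply', ih, D_sum]
    have expand : ∀ p : ℕ × ℕ, D j ((k.choose p.1) • ((D j)^[p.1] g * (D j)^[p.2] h)) =
        (k.choose p.1) • ((D j)^[p.1+1] g * (D j)^[p.2] h)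
          + (k.choose p.1) • ((D j)^[p.1] g * (D j)^[p.2+1] h) := by
      intro p
      rw [D_nsmul, D_mul, smul_add, Function.iterate_succ_apply', Function.iterate_succ_apply']
    rw [Finset.sum_congr rfl fun p _ => expand p, Finset.sum_add_distrib]
    -- RHS
    rw [Finset.Nat.sum_antidiagonal_succ]
    have pascal : ∀ p : ℕ × ℕ, ((k+1).choose (p.1+1)) • ((D j)^[p.1+1] g * (D j)^[p.2] h)
        = (k.choose p.1) • ((D j)^[p.1+1] g * (D j)^[p.2] h)
          + (k.choose (p.1+1)) • ((D j)^[p.1+1] g * (D j)^[p.2] h) := by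
      intro p
      rw [Nat.choose_succ_succ, add_smul]
    rw [Finset.sum_congr rfl fun p _ => pascal p, Finset.sum_add_distrib]
    have key : (∑ p ∈ Finset.HasAntidiagonal.antidiagonal k, (k.choose p.1) • ((D j)^[p.1] g * (D j)^[p.2+1] h))
        = ((k+1).choose 0) • ((D j)^[0] g * (D j)^[k+1] h)
          + ∑ p ∈ Finset.HasAntidiagonal.antidiagonal k, (k.choose (p.1+1)) • ((D j)^[p.1+1] g * (D j)^[p.2] h) := by
      have h1 := Finset.Nat.sum_antidiagonal_succ
        (n := k) (f := fun p => (k.choose p.1) • ((D j)^[p.1] g * (D j)^[p.2] h))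
      have h2 := Finset.Nat.sum_antidiagonal_succ'
        (n := k) (f := fun p => (k.choose p.1) • ((D j)^[p.1] g * (D j)^[p.2] h))
      rw [h2] at h1
      simp only [Nat.choose_succ_self, zero_smul, zero_add, Nat.choose_zero_right] at h1 ⊢
      rw [← h1]
    rw [key]
    abel

lemma triangle_eq_square {M : Type*} [AddCommMonoid M] (n : ℕ) (F : ℕ → ℕ → M)
    (hF : ∀ i l, n < i + l → F i l = 0) :
    ∑ i ∈ Finset.range (n+1), ∑ l ∈ Finset.range (n+1), F i l
      = ∑ k ∈ Finset.range (n+1), ∑ p ∈ Finset.HasAntidiagonal.antidiagonal k, F p.1 p.2 := by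
  classical
  have hdisj : (↑(Finset.range (n+1)) : Set ℕ).PairwiseDisjoint Finset.HasAntidiagonal.antidiagonal := by
    intro k _ k' _ hne
    refine Finset.disjoint_left.2 fun p hp hp' => hne ?_
    rw [← Finset.HasAntidiagonal.mem_antidiagonal.1 hp, ← Finset.HasAntidiagonal.mem_antidiagonal.1 hp']
  have hset : (Finset.range (n+1)).biUnion Finset.HasAntidiagonal.antidiagonal
      = (Finset.range (n+1) ×ˢ Finset.range (n+1)).filter (fun p => p.1 + p.2 ≤ n) := by
    ext p
    simp only [Finset.mem_biUnion, Finset.HasAntidiagonal.mem_antidiagonal, Finset.mem_filter,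
      Finset.mem_product, Finset.mem_range]
    constructor
    · rintro ⟨k, hk, rfl⟩; omega
    · rintro ⟨⟨h1, h2⟩, h3⟩; exact ⟨p.1 + p.2, by omega, rfl⟩
  rw [← Finset.sum_product', ← Finset.sum_biUnion hdisj, hset]
  exact (Finset.sum_subset (Finset.filter_subset _ _) (fun p hp hnp => by
    simp only [Finset.mem_filter, Finset.mem_product, Finset.mem_range] at hp hnp
    exact hF p.1 p.2 (by omega))).symm

lemma fact_ne (k : ℕ) : ((Nat.factorial k : ℕ) : ℂ) ≠ 0 :=
  Nat.cast_ne_zero.2 (Nat.factorial_ne_zero k)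

lemma choose_scalar (c : ℂ) (p1 p2 : ℕ) :
    c ^ (p1 + p2) / ((Nat.factorial (p1+p2) : ℕ) : ℂ) * (((p1+p2).choose p1 : ℕ) : ℂ)
      = c ^ p1 / (Nat.factorial p1 : ℂ) * (c ^ p2 / (Nat.factorial p2 : ℂ)) := by
  have hnat : (p1+p2).choose p1 * Nat.factorial p1 * Nat.factorial p2
      = Nat.factorial (p1+p2) := by
    have := Nat.choose_mul_factorial_mul_factorial (show p1 ≤ p1 + p2 by omega)
    simpa using this
  have hCast : (((p1+p2).choose p1 : ℕ) : ℂ) * (Nat.factorial p1 : ℂ) * (Nat.factorial p2 : ℂ)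
      = ((Nat.factorial (p1+p2) : ℕ) : ℂ) := by exact_mod_cast congrArg (Nat.cast : ℕ → ℂ) hnat
  have h1 := fact_ne p1; have h2 := fact_ne p2; have h3 := fact_ne (p1+p2)
  field_simp
  linear_combination c ^ p1 * c ^ p2 * hCast

lemma coeff_mul_iterate_vanish {j : ℕ} (hj : 1 ≤ j) (g h : PowerSeries ℂ) (n i l : ℕ)
    (hil : n < i + l) :
    PowerSeries.coeff n ((D j)^[i] g * (D j)^[l] h) = 0 := by
  rw [PowerSeries.coeff_mul]
  apply Finset.sum_eq_zero
  intro q hq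
  have hqn := Finset.HasAntidiagonal.mem_antidiagonal.1 hq
  rcases lt_or_ge q.1 i with h1 | h1
  · rw [coeff_iterate_D_eq_zero' hj h1, zero_mul]
  · rw [coeff_iterate_D_eq_zero' (k := l) (n := q.2) hj (by omega), mul_zero]

lemma expD_mul {j : ℕ} (hj : 1 ≤ j) (c : ℂ) (g h : PowerSeries ℂ) :
    expD j c (g * h) = expD j c g * expD j c h := by
  ext n
  set F : ℕ → ℕ → ℂ := fun i l => (c ^ i / (Nat.factorial i : ℂ)) * (c ^ l / (Nat.factorial l : ℂ))
    * PowerSeries.coeff n ((D j)^[i] g * (D j)^[l] h) with hF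
  have hFv : ∀ i l, n < i + l → F i l = 0 := by
    intro i l hil
    rw [hF]
    simp only
    rw [coeff_mul_iterate_vanish hj g h n i l hil, mul_zero]
  have hL : PowerSeries.coeff n (expD j c (g * h))
      = ∑ i ∈ Finset.range (n+1), ∑ l ∈ Finset.range (n+1), F i l := by
    rw [triangle_eq_square n F hFv, coeff_expD]
    apply Finset.sum_congr rfl
    intro k _
    rw [iterate_D_mul, map_sum, Finset.mul_sum]
    apply Finset.sum_congr rfl
    intro p hp
    have hpk := Finset.HasAntidiagonal.mem_antidiagonal.1 hp
    rw [map_nsmul, nsmul_eq_mul]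
    have step : c ^ k / ((Nat.factorial k : ℕ) : ℂ) * (((k.choose p.1 : ℕ) : ℂ)
          * PowerSeries.coeff n ((D j)^[p.1] g * (D j)^[p.2] h))
        = (c ^ k / ((Nat.factorial k : ℕ) : ℂ) * ((k.choose p.1 : ℕ) : ℂ))
          * PowerSeries.coeff n ((D j)^[p.1] g * (D j)^[p.2] h) := by ring
    rw [step, ← hpk, choose_scalar, hF]
  have hR : PowerSeries.coeff n (expD j c g * expD j c h)
      = ∑ i ∈ Finset.range (n+1), ∑ l ∈ Finset.range (n+1), F i l := by
    rw [PowerSeries.coeff_mul]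
    have hq : ∀ q : ℕ × ℕ, q ∈ Finset.HasAntidiagonal.antidiagonal n →
        PowerSeries.coeff q.1 (expD j c g) * PowerSeries.coeff q.2 (expD j c h)
        = ∑ i ∈ Finset.range (n+1), ∑ l ∈ Finset.range (n+1),
            (c ^ i / (Nat.factorial i : ℂ)) * (c ^ l / (Nat.factorial l : ℂ))
            * (PowerSeries.coeff q.1 ((D j)^[i] g) * PowerSeries.coeff q.2 ((D j)^[l] h)) := by
      intro q hq
      have hqn := Finset.HasAntidiagonal.mem_antidiagonal.1 hq
      rw [coeff_expD, coeff_expD]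
      have e1 : ∑ k ∈ Finset.range (q.1 + 1), (c ^ k / (Nat.factorial k : ℂ))
            * PowerSeries.coeff q.1 ((D j)^[k] g)
          = ∑ k ∈ Finset.range (n+1), (c ^ k / (Nat.factorial k : ℂ))
            * PowerSeries.coeff q.1 ((D j)^[k] g) := by
        apply Finset.sum_subset (Finset.range_subset_range.2 (by omega))
        intro k _ hk
        rw [coeff_iterate_D_eq_zero' hj (by simp only [Finset.mem_range] at hk; omega), mul_zero]
      have e2 : ∑ k ∈ Finset.range (q.2 + 1), (c ^ k / (Nat.factorial k : ℂ))
            * PowerSeries.coeff q.2 ((D j)^[k] h)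
          = ∑ k ∈ Finset.range (n+1), (c ^ k / (Nat.factorial k : ℂ))
            * PowerSeries.coeff q.2 ((D j)^[k] h) := by
        apply Finset.sum_subset (Finset.range_subset_range.2 (by omega))
        intro k _ hk
        rw [coeff_iterate_D_eq_zero' hj (by simp only [Finset.mem_range] at hk; omega), mul_zero]
      rw [e1, e2, Finset.sum_mul_sum]
      apply Finset.sum_congr rfl; intro i _
      apply Finset.sum_congr rfl; intro l _
      ring
    rw [Finset.sum_congr rfl hq, Finset.sum_comm]
    apply Finset.sum_congr rfl; intro i _
    rw [Finset.sum_comm]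
    apply Finset.sum_congr rfl; intro l _
    rw [hF]
    simp only
    rw [PowerSeries.coeff_mul, Finset.mul_sum]
  rw [hL, hR]

lemma D_expD_comm {j : ℕ} (hj : 1 ≤ j) (c : ℂ) (h : PowerSeries ℂ) :
    D j (expD j c h) = expD j c (D j h) := by
  ext n
  rw [coeff_D, coeff_expD]
  by_cases hn : j + 1 ≤ n
  · rw [if_pos hn, coeff_expD, Finset.mul_sum]
    have ext1 : ∑ k ∈ Finset.range (n - j + 1), ((n - j : ℕ) : ℂ)
          * ((c ^ k / (Nat.factorial k : ℂ)) * PowerSeries.coeff (n - j) ((D j)^[k] h))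
        = ∑ k ∈ Finset.range (n + 1), ((n - j : ℕ) : ℂ)
          * ((c ^ k / (Nat.factorial k : ℂ)) * PowerSeries.coeff (n - j) ((D j)^[k] h)) := by
      apply Finset.sum_subset (Finset.range_subset_range.2 (by omega))
      intro k _ hk
      rw [coeff_iterate_D_eq_zero' hj (by simp only [Finset.mem_range] at hk; omega),
        mul_zero, mul_zero]
    rw [ext1]
    apply Finset.sum_congr rfl
    intro k _
    rw [← Function.iterate_succ_apply, Function.iterate_succ_apply', coeff_D, if_pos hn]
    ring
  · rw [if_neg hn]
    symm
    rw [coeff_expD]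
    apply Finset.sum_eq_zero
    intro k _
    rw [← Function.iterate_succ_apply, Function.iterate_succ_apply', coeff_D, if_neg hn, mul_zero]

lemma iterate_D_expD_comm {j : ℕ} (hj : 1 ≤ j) (c : ℂ) (k : ℕ) (h : PowerSeries ℂ) :
    (D j)^[k] (expD j c h) = expD j c ((D j)^[k] h) := by
  induction k with
  | zero => rfl
  | succ k ih => rw [Function.iterate_succ_apply', Function.iterate_succ_apply', ih,
      D_expD_comm hj]

lemma expD_zero (j : ℕ) (g : PowerSeries ℂ) : expD j 0 g = g := by
  ext n
  rw [coeff_expD, Finset.sum_eq_single_of_mem 0 (Finset.mem_range.2 (by omega))]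
  · simp
  · intro k _ hk
    rw [zero_pow hk, zero_div, zero_mul]

lemma expD_expD {j : ℕ} (hj : 1 ≤ j) (b c : ℂ) (h : PowerSeries ℂ) :
    expD j b (expD j c h) = expD j (b + c) h := by
  ext n
  rw [coeff_expD, coeff_expD]
  set F : ℕ → ℕ → ℂ := fun k i => (b ^ k / (Nat.factorial k : ℂ)) * (c ^ i / (Nat.factorial i : ℂ))
    * PowerSeries.coeff n ((D j)^[k + i] h) with hF
  have hFv : ∀ k i, n < k + i → F k i = 0 := by
    intro k i hki
    rw [hF]; simp only
    rw [coeff_iterate_D_eq_zero' hj hki, mul_zero]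
  have hL : ∑ k ∈ Finset.range (n+1), (b ^ k / (Nat.factorial k : ℂ))
        * PowerSeries.coeff n ((D j)^[k] (expD j c h))
      = ∑ k ∈ Finset.range (n+1), ∑ i ∈ Finset.range (n+1), F k i := by
    apply Finset.sum_congr rfl; intro k _
    rw [iterate_D_expD_comm hj, coeff_expD, Finset.mul_sum]
    apply Finset.sum_congr rfl; intro i _
    rw [hF]; simp only
    rw [← Function.iterate_add_apply, Nat.add_comm i k]
    ring
  rw [hL, triangle_eq_square n F hFv]
  apply Finset.sum_congr rfl; intro m _
  rw [Finset.Nat.sum_antidiagonal_eq_sum_range_succ (fun k i => F k i) m]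
  have : ∀ k ∈ Finset.range (m+1), F k (m - k)
      = (b ^ k * c ^ (m-k) / ((Nat.factorial k : ℂ) * (Nat.factorial (m-k) : ℂ)))
        * PowerSeries.coeff n ((D j)^[m] h) := by
    intro k hk
    rw [hF]; simp only
    rw [show k + (m - k) = m from by simp only [Finset.mem_range] at hk; omega]
    ring
  rw [Finset.sum_congr rfl this, ← Finset.sum_mul]
  congr 1
  -- binomial: ∑ b^k c^(m-k) / (k! (m-k)!) = (b+c)^m / m!
  rw [add_pow]
  rw [Finset.sum_div]
  apply Finset.sum_congr rfl; intro k hk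
  have hkm : k ≤ m := by simp only [Finset.mem_range] at hk; omega
  have hnat : m.choose k * Nat.factorial k * Nat.factorial (m - k) = Nat.factorial m :=
    Nat.choose_mul_factorial_mul_factorial hkm
  have hCast : ((m.choose k : ℕ) : ℂ) * (Nat.factorial k : ℂ) * (Nat.factorial (m-k) : ℂ)
      = ((Nat.factorial m : ℕ) : ℂ) := by exact_mod_cast congrArg (Nat.cast : ℕ → ℂ) hnat
  have h1 := fact_ne k; have h2 := fact_ne (m-k); have h3 := fact_ne m
  rw [div_eq_div_iff (mul_ne_zero h1 h2) h3]
  linear_combination (-(b ^ k * c ^ (m-k))) * hCast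


/-- The partial product `exp(b_N x^{N+1} d/dx) ⋯ exp(b_2 x^3 d/dx) exp(b_1 x^2 d/dx) ⋅ x`. -/
noncomputable def partialProd (b : ℕ → ℂ) : ℕ → PowerSeries ℂ
  | 0 => PowerSeries.X
  | N + 1 => expD (N + 1) (b (N + 1)) (partialProd b N)

/-- The infinite product `⋯ exp(b_2 x^3 d/dx) exp(b_1 x^2 d/dx) ⋅ x`: the coefficient of
`x^n` stabilizes from stage `n` on, so the limit is given coefficientwise. -/
noncomputable def limitProd (b : ℕ → ℂ) : PowerSeries ℂ :=
  PowerSeries.mk fun n => PowerSeries.coeff n (partialProd b n)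

/-- The partial product `exp(-b_1 x^2 d/dx) exp(-b_2 x^3 d/dx) ⋯ exp(-b_N x^{N+1} d/dx) ⋅ x`
(the factor with the largest index is applied to `x` first). -/
noncomputable def revPartialProd (b : ℕ → ℂ) (N : ℕ) : PowerSeries ℂ :=
  (List.range N).foldr (fun k g => expD (k + 1) (-(b (k + 1))) g) PowerSeries.X

/-- The infinite product `exp(-b_1 x^2 d/dx) exp(-b_2 x^3 d/dx) ⋯ ⋅ x`, defined
coefficientwise since the coefficient of `x^n` stabilizes. -/
noncomputable def limitRevProd (b : ℕ → ℂ) : PowerSeries ℂ :=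
  PowerSeries.mk fun n => PowerSeries.coeff n (revPartialProd b n)

/-- Composition `f(g)` of formal power series, valid when `g` has zero constant term
(then `g^k` has order at least `k`, so each coefficient is the finite sum below). -/
noncomputable def comp (f g : PowerSeries ℂ) : PowerSeries ℂ :=
  PowerSeries.mk fun n =>
    ∑ k ∈ Finset.range (n + 1), PowerSeries.coeff k f * PowerSeries.coeff n (g ^ k)


lemma coeff_comp (f g : PowerSeries ℂ) (n : ℕ) :
    PowerSeries.coeff n (comp f g)
      = ∑ k ∈ Finset.range (n + 1), PowerSeries.coeff k f * PowerSeries.coeff n (g ^ k) := by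
  rw [comp, PowerSeries.coeff_mk]

lemma coeff_pow_eq_zero {g : PowerSeries ℂ} (hg0 : PowerSeries.coeff 0 g = 0) {k n : ℕ}
    (hn : n < k) : PowerSeries.coeff n (g ^ k) = 0 := by
  have : PowerSeries.X ∣ g := PowerSeries.X_dvd_iff.2 (by
    rwa [← PowerSeries.coeff_zero_eq_constantCoeff_apply])
  obtain ⟨w, rfl⟩ := this
  rw [mul_pow, PowerSeries.coeff_X_pow_mul', if_neg (by omega)]

lemma coeff0_comp (f g : PowerSeries ℂ) :
    PowerSeries.coeff 0 (comp f g) = PowerSeries.coeff 0 f := by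
  rw [coeff_comp]
  simp

lemma comp_X_right (f : PowerSeries ℂ) : comp f PowerSeries.X = f := by
  ext n
  rw [coeff_comp, Finset.sum_eq_single_of_mem n (Finset.mem_range.2 (by omega))]
  · rw [PowerSeries.coeff_X_pow, if_pos rfl, mul_one]
  · intro k _ hk
    rw [PowerSeries.coeff_X_pow, if_neg (fun hh => hk hh.symm), mul_zero]

lemma comp_X_left {g : PowerSeries ℂ} (hg0 : PowerSeries.coeff 0 g = 0) :
    comp PowerSeries.X g = g := by
  ext n
  rw [coeff_comp]
  rcases Nat.eq_zero_or_pos n with rfl | hn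
  · simpa using hg0.symm
  · rw [Finset.sum_eq_single_of_mem 1 (Finset.mem_range.2 (by omega))]
    · rw [PowerSeries.coeff_X, if_pos rfl, pow_one, one_mul]
    · intro k _ hk
      rw [PowerSeries.coeff_X, if_neg hk, zero_mul]

lemma comp_one_left (g : PowerSeries ℂ) : comp 1 g = 1 := by
  ext n
  rw [coeff_comp, Finset.sum_eq_single_of_mem 0 (Finset.mem_range.2 (by omega))]
  · rw [pow_zero]
    simp [PowerSeries.coeff_one]
  · intro k _ hk
    rw [PowerSeries.coeff_one, if_neg hk, zero_mul]

lemma comp_addLeft (f₁ f₂ g : PowerSeries ℂ) :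
    comp (f₁ + f₂) g = comp f₁ g + comp f₂ g := by
  ext n
  rw [map_add, coeff_comp, coeff_comp, coeff_comp, ← Finset.sum_add_distrib]
  exact Finset.sum_congr rfl fun k _ => by rw [map_add, add_mul]

lemma comp_C_mul_left (a : ℂ) (f g : PowerSeries ℂ) :
    comp (PowerSeries.C a * f) g = PowerSeries.C a * comp f g := by
  ext n
  rw [PowerSeries.coeff_C_mul, coeff_comp, coeff_comp, Finset.mul_sum]
  exact Finset.sum_congr rfl fun k _ => by rw [PowerSeries.coeff_C_mul]; ring

lemma comp_mul {g : PowerSeries ℂ} (hg0 : PowerSeries.coeff 0 g = 0) (f₁ f₂ : PowerSeries ℂ) :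
    comp (f₁ * f₂) g = comp f₁ g * comp f₂ g := by
  ext n
  set F : ℕ → ℕ → ℂ := fun a b => PowerSeries.coeff a f₁ * PowerSeries.coeff b f₂
    * PowerSeries.coeff n (g ^ (a + b)) with hF
  have hFv : ∀ a b, n < a + b → F a b = 0 := by
    intro a b hab
    rw [hF]; simp only
    rw [coeff_pow_eq_zero hg0 hab, mul_zero]
  have hL : PowerSeries.coeff n (comp (f₁ * f₂) g)
      = ∑ a ∈ Finset.range (n+1), ∑ l ∈ Finset.range (n+1), F a l := by
    rw [triangle_eq_square n F hFv, coeff_comp]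
    apply Finset.sum_congr rfl
    intro k _
    rw [PowerSeries.coeff_mul, Finset.sum_mul]
    apply Finset.sum_congr rfl
    intro p hp
    have hpk := Finset.HasAntidiagonal.mem_antidiagonal.1 hp
    rw [hF]; simp only
    rw [← hpk]
  have hR : PowerSeries.coeff n (comp f₁ g * comp f₂ g)
      = ∑ a ∈ Finset.range (n+1), ∑ l ∈ Finset.range (n+1), F a l := by
    rw [PowerSeries.coeff_mul]
    have hq : ∀ q : ℕ × ℕ, q ∈ Finset.HasAntidiagonal.antidiagonal n →
        PowerSeries.coeff q.1 (comp f₁ g) * PowerSeries.coeff q.2 (comp f₂ g)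
        = ∑ a ∈ Finset.range (n+1), ∑ l ∈ Finset.range (n+1),
            PowerSeries.coeff a f₁ * PowerSeries.coeff l f₂
            * (PowerSeries.coeff q.1 (g ^ a) * PowerSeries.coeff q.2 (g ^ l)) := by
      intro q hq
      have hqn := Finset.HasAntidiagonal.mem_antidiagonal.1 hq
      rw [coeff_comp, coeff_comp]
      have e1 : ∑ k ∈ Finset.range (q.1 + 1),
            PowerSeries.coeff k f₁ * PowerSeries.coeff q.1 (g ^ k)
          = ∑ k ∈ Finset.range (n+1),
            PowerSeries.coeff k f₁ * PowerSeries.coeff q.1 (g ^ k) := by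
        apply Finset.sum_subset (Finset.range_subset_range.2 (by omega))
        intro k _ hk
        rw [coeff_pow_eq_zero hg0 (by simp only [Finset.mem_range] at hk; omega), mul_zero]
      have e2 : ∑ k ∈ Finset.range (q.2 + 1),
            PowerSeries.coeff k f₂ * PowerSeries.coeff q.2 (g ^ k)
          = ∑ k ∈ Finset.range (n+1),
            PowerSeries.coeff k f₂ * PowerSeries.coeff q.2 (g ^ k) := by
        apply Finset.sum_subset (Finset.range_subset_range.2 (by omega))
        intro k _ hk
        rw [coeff_pow_eq_zero hg0 (by simp only [Finset.mem_range] at hk; omega), mul_zero]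
      rw [e1, e2, Finset.sum_mul_sum]
      apply Finset.sum_congr rfl; intro a _
      apply Finset.sum_congr rfl; intro l _
      ring
    rw [Finset.sum_congr rfl hq, Finset.sum_comm]
    apply Finset.sum_congr rfl; intro a _
    rw [Finset.sum_comm]
    apply Finset.sum_congr rfl; intro l _
    rw [hF]; simp only
    rw [pow_add, PowerSeries.coeff_mul, Finset.mul_sum]
  rw [hL, hR]

lemma comp_pow {g : PowerSeries ℂ} (hg0 : PowerSeries.coeff 0 g = 0) (f : PowerSeries ℂ)
    (m : ℕ) : comp (f ^ m) g = (comp f g) ^ m := by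
  induction m with
  | zero => rw [pow_zero, pow_zero, comp_one_left]
  | succ m ih => rw [pow_succ, pow_succ, comp_mul hg0, ih]

lemma comp_assoc {g h : PowerSeries ℂ} (hg0 : PowerSeries.coeff 0 g = 0)
    (hh0 : PowerSeries.coeff 0 h = 0) (f : PowerSeries ℂ) :
    comp (comp f g) h = comp f (comp g h) := by
  ext n
  rw [coeff_comp, coeff_comp]
  have key : ∀ i : ℕ, PowerSeries.coeff n ((comp g h) ^ i)
      = ∑ k ∈ Finset.range (n+1), PowerSeries.coeff k (g ^ i) * PowerSeries.coeff n (h ^ k) := by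
    intro i
    rw [← comp_pow hh0 g i, coeff_comp]
  have hL : ∀ k ∈ Finset.range (n+1),
      PowerSeries.coeff k (comp f g) * PowerSeries.coeff n (h ^ k)
      = ∑ i ∈ Finset.range (n+1),
          PowerSeries.coeff i f * PowerSeries.coeff k (g ^ i) * PowerSeries.coeff n (h ^ k) := by
    intro k hk
    rw [coeff_comp, Finset.sum_mul]
    apply Finset.sum_subset (Finset.range_subset_range.2 (by simp only [Finset.mem_range] at hk; omega))
    intro i _ hi
    rw [coeff_pow_eq_zero hg0 (by simp only [Finset.mem_range] at hi; omega), mul_zero, zero_mul]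
  rw [Finset.sum_congr rfl hL, Finset.sum_comm]
  apply Finset.sum_congr rfl; intro i _
  rw [key i, Finset.mul_sum]
  apply Finset.sum_congr rfl; intro k _
  ring

lemma coeff_pow_congr {n : ℕ} {g g' : PowerSeries ℂ}
    (h : ∀ m ≤ n, PowerSeries.coeff m g = PowerSeries.coeff m g') (k : ℕ) :
    ∀ m ≤ n, PowerSeries.coeff m (g ^ k) = PowerSeries.coeff m (g' ^ k) := by
  induction k with
  | zero => intro m _; rfl
  | succ k ih =>
    intro m hm
    rw [pow_succ, pow_succ, PowerSeries.coeff_mul, PowerSeries.coeff_mul]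
    apply Finset.sum_congr rfl
    intro p hp
    have hpm := Finset.HasAntidiagonal.mem_antidiagonal.1 hp
    rw [ih p.1 (by omega), h p.2 (by omega)]

lemma coeff_comp_congr {n : ℕ} {f f' g g' : PowerSeries ℂ}
    (hf : ∀ m ≤ n, PowerSeries.coeff m f = PowerSeries.coeff m f')
    (hg : ∀ m ≤ n, PowerSeries.coeff m g = PowerSeries.coeff m g') :
    PowerSeries.coeff n (comp f g) = PowerSeries.coeff n (comp f' g') := by
  rw [coeff_comp, coeff_comp]
  apply Finset.sum_congr rfl
  intro k hk
  rw [hf k (by simp only [Finset.mem_range] at hk; omega),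
    coeff_pow_congr hg k n le_rfl]

lemma coeff0_expD (j : ℕ) (c : ℂ) (g : PowerSeries ℂ) :
    PowerSeries.coeff 0 (expD j c g) = PowerSeries.coeff 0 g :=
  coeff_expD_of_le (Nat.zero_le j) c g

lemma coeff0_expD_X (j : ℕ) (c : ℂ) :
    PowerSeries.coeff 0 (expD j c PowerSeries.X) = 0 := by
  rw [coeff0_expD]
  simp

lemma expD_pow_X {j : ℕ} (hj : 1 ≤ j) (c : ℂ) (m : ℕ) :
    expD j c (PowerSeries.X ^ m) = (expD j c PowerSeries.X) ^ m := by
  induction m with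
  | zero => rw [pow_zero, pow_zero, expD_one]
  | succ m ih => rw [pow_succ, pow_succ, expD_mul hj, ih]

lemma expD_eq_comp {j : ℕ} (hj : 1 ≤ j) (c : ℂ) (g : PowerSeries ℂ) :
    expD j c g = comp g (expD j c PowerSeries.X) := by
  set u := expD j c PowerSeries.X with hu
  have hu0 : PowerSeries.coeff 0 u = 0 := coeff0_expD_X j c
  ext n
  set T : PowerSeries ℂ := ∑ m ∈ Finset.range (n+1),
    PowerSeries.C (PowerSeries.coeff m g) * PowerSeries.X ^ m with hTdef
  have hT : ∀ m ≤ n, PowerSeries.coeff m T = PowerSeries.coeff m g := by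
    intro m hm
    rw [hTdef, map_sum, Finset.sum_eq_single_of_mem m (Finset.mem_range.2 (by omega))]
    · rw [PowerSeries.coeff_C_mul, PowerSeries.coeff_X_pow, if_pos rfl, mul_one]
    · intro i _ hi
      rw [PowerSeries.coeff_C_mul, PowerSeries.coeff_X_pow, if_neg (fun hh => hi hh.symm),
        mul_zero]
  have hcore : expD j c T = comp T u := by
    have e1 : expD j c T = ∑ m ∈ Finset.range (n+1),
        PowerSeries.C (PowerSeries.coeff m g) * u ^ m := by
      rw [hTdef]
      refine Eq.trans (map_sum (AddMonoidHom.mk' (expD j c) (expD_add j c))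
        (fun m => PowerSeries.C (PowerSeries.coeff m g) * PowerSeries.X ^ m)
        (Finset.range (n+1))) ?_
      apply Finset.sum_congr rfl
      intro m _
      show expD j c _ = _
      rw [expD_C_mul, expD_pow_X hj]
    have e2 : comp T u = ∑ m ∈ Finset.range (n+1),
        PowerSeries.C (PowerSeries.coeff m g) * u ^ m := by
      rw [hTdef]
      refine Eq.trans (map_sum (AddMonoidHom.mk' (fun f => comp f u)
        (fun f₁ f₂ => comp_addLeft f₁ f₂ u))
        (fun m => PowerSeries.C (PowerSeries.coeff m g) * PowerSeries.X ^ m)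
        (Finset.range (n+1))) ?_
      apply Finset.sum_congr rfl
      intro m _
      show comp _ u = _
      rw [comp_C_mul_left, comp_pow hu0, comp_X_left hu0]
    rw [e1, e2]
  calc PowerSeries.coeff n (expD j c g)
      = PowerSeries.coeff n (expD j c T) :=
        (coeff_expD_congr j c (fun m hm => (hT m hm).symm) n le_rfl).symm.symm
    _ = PowerSeries.coeff n (comp T u) := by rw [hcore]
    _ = PowerSeries.coeff n (comp g u) :=
        coeff_comp_congr hT (fun _ _ => rfl)

lemma expD_comp_inv {j : ℕ} (hj : 1 ≤ j) (c : ℂ) :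
    comp (expD j c PowerSeries.X) (expD j (-c) PowerSeries.X) = PowerSeries.X := by
  rw [← expD_eq_comp hj (-c) (expD j c PowerSeries.X), expD_expD hj, neg_add_cancel, expD_zero]

noncomputable def myRev (b : ℕ → ℂ) (s : PowerSeries ℂ) (N : ℕ) : PowerSeries ℂ :=
  (List.range N).foldr (fun k g => expD (k + 1) (-(b (k + 1))) g) s

lemma revPartialProd_eq (b : ℕ → ℂ) (N : ℕ) : revPartialProd b N = myRev b PowerSeries.X N := rfl

lemma myRev_succ (b : ℕ → ℂ) (s : PowerSeries ℂ) (N : ℕ) :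
    myRev b s (N + 1) = myRev b (expD (N + 1) (-(b (N + 1))) s) N := by
  rw [myRev, myRev, List.range_succ, List.foldr_append]
  rfl

lemma myRev_coeff_congr (b : ℕ → ℂ) {M : ℕ} {s s' : PowerSeries ℂ}
    (h : ∀ m ≤ M, PowerSeries.coeff m s = PowerSeries.coeff m s') (N : ℕ) :
    ∀ m ≤ M, PowerSeries.coeff m (myRev b s N) = PowerSeries.coeff m (myRev b s' N) := by
  induction N generalizing s s' with
  | zero => exact h
  | succ N ih =>
    intro m hm
    rw [myRev_succ, myRev_succ]
    exact ih (fun i hi => coeff_expD_congr (N+1) (-(b (N+1))) h i hi) m hm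

lemma myRev_coeff0 (b : ℕ → ℂ) (s : PowerSeries ℂ) (N : ℕ) :
    PowerSeries.coeff 0 (myRev b s N) = PowerSeries.coeff 0 s := by
  induction N generalizing s with
  | zero => rfl
  | succ N ih => rw [myRev_succ, ih, coeff0_expD]

lemma myRev_coeff0_X (b : ℕ → ℂ) (N : ℕ) :
    PowerSeries.coeff 0 (myRev b PowerSeries.X N) = 0 := by
  rw [myRev_coeff0]; simp

lemma myRev_eq_comp (b : ℕ → ℂ) (N : ℕ) {s : PowerSeries ℂ}
    (hs0 : PowerSeries.coeff 0 s = 0) :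
    myRev b s N = comp s (myRev b PowerSeries.X N) := by
  induction N generalizing s with
  | zero => rw [myRev, myRev]; simp only [List.range_zero, List.foldr_nil]; rw [comp_X_right]
  | succ N ih =>
    set v := expD (N + 1) (-(b (N + 1))) PowerSeries.X with hv
    have hv0 : PowerSeries.coeff 0 v = 0 := coeff0_expD_X _ _
    have hR0 : PowerSeries.coeff 0 (myRev b PowerSeries.X N) = 0 := myRev_coeff0_X b N
    have hstep : ∀ t : PowerSeries ℂ, expD (N + 1) (-(b (N + 1))) t = comp t v :=
      fun t => expD_eq_comp (by omega) _ t
    rw [myRev_succ, hstep s, ih (by rw [coeff0_comp]; exact hs0),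
      comp_assoc hv0 hR0 s, myRev_succ, hstep PowerSeries.X, comp_X_left hv0,
      ih hv0]

lemma partialProd_coeff0 (b : ℕ → ℂ) (N : ℕ) :
    PowerSeries.coeff 0 (partialProd b N) = 0 := by
  induction N with
  | zero => simp [partialProd]
  | succ N ih => rw [partialProd, coeff0_expD, ih]

lemma telescope (b : ℕ → ℂ) (N : ℕ) :
    comp (partialProd b N) (revPartialProd b N) = PowerSeries.X ∧
    comp (revPartialProd b N) (partialProd b N) = PowerSeries.X := by
  induction N with
  | zero =>
    constructor <;>
      simp only [partialProd, revPartialProd, List.range_zero, List.foldr_nil] <;>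
      rw [comp_X_right]
  | succ N ih =>
    set u := expD (N + 1) (b (N + 1)) PowerSeries.X with hu
    set v := expD (N + 1) (-(b (N + 1))) PowerSeries.X with hvv
    have hu0 : PowerSeries.coeff 0 u = 0 := coeff0_expD_X _ _
    have hv0 : PowerSeries.coeff 0 v = 0 := coeff0_expD_X _ _
    have hP0 : PowerSeries.coeff 0 (partialProd b N) = 0 := partialProd_coeff0 b N
    have hR0 : PowerSeries.coeff 0 (revPartialProd b N) = 0 := myRev_coeff0_X b N
    have hPstep : partialProd b (N + 1) = comp (partialProd b N) u := by
      rw [partialProd, expD_eq_comp (by omega)]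
    have hRstep : revPartialProd b (N + 1) = comp v (revPartialProd b N) := by
      rw [revPartialProd_eq, myRev_succ, myRev_eq_comp b N hv0, revPartialProd_eq]
    have huv : comp u v = PowerSeries.X := expD_comp_inv (by omega) (b (N + 1))
    have hvu : comp v u = PowerSeries.X := by
      have := expD_comp_inv (j := N + 1) (by omega) (-(b (N + 1)))
      rwa [neg_neg] at this
    constructor
    · rw [hPstep, hRstep,
        comp_assoc hu0 (by rw [coeff0_comp]; exact hv0) (partialProd b N),
        ← comp_assoc hv0 hR0 u, huv, comp_X_left hR0, ih.1]
    · rw [hPstep, hRstep,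
        comp_assoc hR0 (by rw [coeff0_comp]; exact hP0) v,
        ← comp_assoc hP0 hu0 (revPartialProd b N), ih.2, comp_X_left hu0, hvu]

lemma partialProd_stab (b : ℕ → ℂ) (m N : ℕ) (h : m ≤ N) :
    PowerSeries.coeff m (partialProd b N) = PowerSeries.coeff m (partialProd b m) := by
  induction N with
  | zero => rw [Nat.le_zero.1 h]
  | succ N ih =>
    rcases Nat.lt_or_ge m (N + 1) with hm | hm
    · rw [partialProd, coeff_expD_of_le (by omega), ih (by omega)]
    · rw [show m = N + 1 by omega]

lemma revPartialProd_stab (b : ℕ → ℂ) (m N : ℕ) (h : m ≤ N) :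
    PowerSeries.coeff m (revPartialProd b N) = PowerSeries.coeff m (revPartialProd b m) := by
  induction N with
  | zero => rw [Nat.le_zero.1 h]
  | succ N ih =>
    rcases Nat.lt_or_ge m (N + 1) with hm | hm
    · have hseed : ∀ i ≤ m, PowerSeries.coeff i (expD (N + 1) (-(b (N + 1))) PowerSeries.X)
          = PowerSeries.coeff i PowerSeries.X :=
        fun i hi => coeff_expD_of_le (by omega) _ _
      rw [revPartialProd_eq, myRev_succ,
        myRev_coeff_congr b hseed N m le_rfl, ← revPartialProd_eq, ih (by omega)]
    · rw [show m = N + 1 by omega]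


/-- If `⋯ exp(b_2 x^3 d/dx) exp(b_1 x^2 d/dx) ⋅ x = f(x)` for
`f(x) = x + ∑_{n≥2} a_n x^n`, then the reversed product with negated coefficients,
`(exp(-b_1 x^2 d/dx) exp(-b_2 x^3 d/dx) ⋯) ⋅ x`, is the compositional inverse
`f^{-1}` of `f`: it satisfies `f(f^{-1}(x)) = f^{-1}(f(x)) = x`. -/
theorem stmt13 (f : PowerSeries ℂ) (h0 : PowerSeries.coeff 0 f = 0)
    (h1 : PowerSeries.coeff 1 f = 1) (b : ℕ → ℂ) (hb : limitProd b = f) :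
    comp f (limitRevProd b) = PowerSeries.X ∧ comp (limitRevProd b) f = PowerSeries.X := by
  have hf : ∀ m N, m ≤ N → PowerSeries.coeff m f = PowerSeries.coeff m (partialProd b N) := by
    intro m N hm
    rw [← hb, limitProd, PowerSeries.coeff_mk, partialProd_stab b m N hm]
  have hR : ∀ m N, m ≤ N →
      PowerSeries.coeff m (limitRevProd b) = PowerSeries.coeff m (revPartialProd b N) := by
    intro m N hm
    rw [limitRevProd, PowerSeries.coeff_mk, revPartialProd_stab b m N hm]
  constructor
  · ext n
    rw [coeff_comp_congr (fun m hm => hf m n hm) (fun m hm => hR m n hm), (telescope b n).1]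
  · ext n
    rw [coeff_comp_congr (fun m hm => hR m n hm) (fun m hm => hf m n hm), (telescope b n).2]
end
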